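/- (Invariance of the common zero set for a system in particular involution.) Let f₁,…,f_k : ℝ^n × ℝ^n → ℝ be smooth functions in particular involution, i.e. {f_i, f_j} = Σ_m a^{ij}_m f_m pointwise for some smooth functions a^{ij}_m. Let γ : I → ℝ^n × ℝ^n be a smooth integral curve of the Hamiltonian vector field X_{f₁} on an open interval I such that each function t ↦ f_j(γ(t)) is real-analytic on I. If f_j(γ(t₀)) = 0 for all j = 1,…,k at some t₀ ∈ I, then f_j(γ(t)) = 0 for all j and all t ∈ I. -/

import Mathlib

open scoped BigOperators

/-- The `i`-th coordinate direction in the `q` (position) factor of phase space `ℝⁿ × ℝⁿ`. -/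
noncomputable def eQ (n : ℕ) (i : Fin n) : (Fin n → ℝ) × (Fin n → ℝ) :=
  (Pi.single i 1, 0)

/-- The `i`-th coordinate direction in the `p` (momentum) factor of phase space `ℝⁿ × ℝⁿ`. -/
noncomputable def eP (n : ℕ) (i : Fin n) : (Fin n → ℝ) × (Fin n → ℝ) :=
  (0, Pi.single i 1)

/-- The canonical Poisson bracket `{f,g} = Σᵢ (∂f/∂qⁱ ∂g/∂pᵢ − ∂f/∂pᵢ ∂g/∂qⁱ)` on `ℝⁿ × ℝⁿ`. -/
noncomputable def poissonBracket {n : ℕ} (f g : (Fin n → ℝ) × (Fin n → ℝ) → ℝ)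
    (x : (Fin n → ℝ) × (Fin n → ℝ)) : ℝ :=
  ∑ i : Fin n, (fderiv ℝ f x (eQ n i) * fderiv ℝ g x (eP n i)
    - fderiv ℝ f x (eP n i) * fderiv ℝ g x (eQ n i))

/-- The Hamiltonian vector field `X_f = (∂f/∂p₁,…,∂f/∂pₙ, −∂f/∂q¹,…,−∂f/∂qⁿ)` on `ℝⁿ × ℝⁿ`. -/
noncomputable def hamVF {n : ℕ} (f : (Fin n → ℝ) × (Fin n → ℝ) → ℝ)
    (x : (Fin n → ℝ) × (Fin n → ℝ)) : (Fin n → ℝ) × (Fin n → ℝ) :=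
  (fun i => fderiv ℝ f x (eP n i), fun i => - fderiv ℝ f x (eQ n i))

lemma phase_decomp {n : ℕ} (v : (Fin n → ℝ) × (Fin n → ℝ)) :
    v = (∑ i, v.1 i • eQ n i) + ∑ i, v.2 i • eP n i := by
  apply Prod.ext <;> funext j <;>
    simp [eQ, eP, Finset.sum_apply, Pi.single_apply, mul_ite, Finset.sum_ite_eq', Prod.fst_sum, Prod.snd_sum]

lemma fderiv_apply_hamVF {n : ℕ} (F G : (Fin n → ℝ) × (Fin n → ℝ) → ℝ)
    (x : (Fin n → ℝ) × (Fin n → ℝ)) :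
    fderiv ℝ G x (hamVF F x) = poissonBracket G F x := by
  conv_lhs => rw [phase_decomp (hamVF F x)]
  rw [map_add, map_sum, map_sum]
  simp only [map_smul, smul_eq_mul]
  rw [← Finset.sum_add_distrib]
  unfold poissonBracket hamVF
  refine Finset.sum_congr rfl fun i _ => ?_
  ring

lemma hamVF_smooth {n : ℕ} {F : (Fin n → ℝ) × (Fin n → ℝ) → ℝ}
    (hF : ContDiff ℝ (⊤ : ℕ∞) F) : ContDiff ℝ (⊤ : ℕ∞) (hamVF F) := by
  have hd : ContDiff ℝ (⊤ : ℕ∞) (fderiv ℝ F) := hF.fderiv_right (by exact_mod_cast le_top)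
  refine ContDiff.prodMk ?_ ?_ <;> refine contDiff_pi.mpr fun i => ?_
  · exact hd.clm_apply contDiff_const
  · exact (hd.clm_apply contDiff_const).neg

lemma analytic_eventually_zero {g : ℝ → ℝ} {t₀ : ℝ} (hg : AnalyticAt ℝ g t₀)
    (h : ∀ N, iteratedDeriv N g t₀ = 0) : g =ᶠ[nhds t₀] 0 := by
  obtain ⟨p, r, hp⟩ := hg
  have key : ∀ y ∈ Metric.eball (0 : ℝ) r, g (t₀ + y) = 0 := by
    intro y hy
    have hs := hp.hasSum_iteratedFDeriv hy
    have hz : ∀ N : ℕ, ((N.factorial : ℝ)⁻¹ • iteratedFDeriv ℝ N g t₀ fun _ => y) = 0 := by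
      intro N
      have h1 : (fun _ : Fin N => y) = fun _ : Fin N => y • (1 : ℝ) := by
        funext; simp
      rw [h1, ContinuousMultilinearMap.map_smul_univ, ← iteratedDeriv_eq_iteratedFDeriv,
        h N, smul_zero, smul_zero]
    rw [funext hz] at hs
    exact hs.unique hasSum_zero
  filter_upwards [Metric.eball_mem_nhds t₀ hp.r_pos] with t ht
  have hyt : (t - t₀) ∈ Metric.eball (0 : ℝ) r := by
    simpa [Metric.mem_eball, edist_dist, dist_eq_norm] using ht
  simpa using key (t - t₀) hyt

/-- (Invariance of the common zero set for a system in particular involution.)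
If smooth `f₁,…,f_k` satisfy `{fᵢ,fⱼ} = Σₘ aᵢⱼₘ fₘ` pointwise and `γ` is a smooth integral
curve of `X_{f₁}` on an open interval along which each `t ↦ fⱼ (γ t)` is real-analytic, then
vanishing of all the `fⱼ` at `γ t₀` implies they vanish along the whole curve. -/
theorem common_zero_set_invariant_of_particular_involution {n k : ℕ} (hk : 0 < k)
    (f : Fin k → (Fin n → ℝ) × (Fin n → ℝ) → ℝ)
    (a : Fin k → Fin k → Fin k → (Fin n → ℝ) × (Fin n → ℝ) → ℝ)
    (hf : ∀ i, ContDiff ℝ (⊤ : ℕ∞) (f i))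
    (ha : ∀ i j m, ContDiff ℝ (⊤ : ℕ∞) (a i j m))
    (hinv : ∀ i j x, poissonBracket (f i) (f j) x = ∑ m, a i j m x * f m x)
    (t₁ t₂ : ℝ) (γ : ℝ → (Fin n → ℝ) × (Fin n → ℝ))
    (hγsmooth : ContDiffOn ℝ (⊤ : ℕ∞) γ (Set.Ioo t₁ t₂))
    (hHam : ∀ t ∈ Set.Ioo t₁ t₂, HasDerivAt γ (hamVF (f ⟨0, hk⟩) (γ t)) t)
    (hanal : ∀ j, AnalyticOnNhd ℝ (fun t => f j (γ t)) (Set.Ioo t₁ t₂))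
    (t₀ : ℝ) (ht₀ : t₀ ∈ Set.Ioo t₁ t₂) (hzero : ∀ j, f j (γ t₀) = 0) :
    ∀ j, ∀ t ∈ Set.Ioo t₁ t₂, f j (γ t) = 0 := by
  set z : Fin k := ⟨0, hk⟩
  set f0 : (Fin n → ℝ) × (Fin n → ℝ) → ℝ := f z with hf0
  set I : Set ℝ := Set.Ioo t₁ t₂ with hI
  -- the predicate of being a smooth combination of the fⱼ along γ
  set Good : (ℝ → ℝ) → Prop := fun h =>
    ∃ c : Fin k → (Fin n → ℝ) × (Fin n → ℝ) → ℝ,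
      (∀ m, ContDiff ℝ (⊤ : ℕ∞) (c m)) ∧
      ∀ t ∈ I, h t = ∑ m, c m (γ t) * f m (γ t) with hGood
  have hIopen : IsOpen I := isOpen_Ioo
  -- Good is stable under deriv
  have key1 : ∀ h : ℝ → ℝ, Good h → Good (deriv h) := by
    rintro h ⟨c, hc, hrep⟩
    refine ⟨fun r x => fderiv ℝ (c r) x (hamVF f0 x) + ∑ m, c m x * a m z r x, ?_, ?_⟩
    · intro r
      exact (((hc r).fderiv_right (by exact_mod_cast le_top)).clm_apply
        (hamVF_smooth (hf z))).add
        (ContDiff.sum fun m _ => (hc m).mul (ha m z r))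
    · intro t ht
      have hev : h =ᶠ[nhds t] fun s => ∑ m, c m (γ s) * f m (γ s) := by
        filter_upwards [hIopen.mem_nhds ht] with s hs using hrep s hs
      have hD : HasDerivAt (fun s => ∑ m, c m (γ s) * f m (γ s))
          (∑ m, (fderiv ℝ (c m) (γ t) (hamVF f0 (γ t)) * f m (γ t)
            + c m (γ t) * fderiv ℝ (f m) (γ t) (hamVF f0 (γ t)))) t := by
        refine HasDerivAt.fun_sum fun m _ => HasDerivAt.mul ?_ ?_
        · exact (((hc m).differentiable (by simp) (γ t)).hasFDerivAt).comp_hasDerivAt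
            t (hHam t ht)
        · exact (((hf m).differentiable (by simp) (γ t)).hasFDerivAt).comp_hasDerivAt
            t (hHam t ht)
      have hderiv := (hD.congr_of_eventuallyEq hev).deriv
      rw [hderiv]
      simp only [fderiv_apply_hamVF, hf0, hinv]
      simp only [add_mul, Finset.sum_add_distrib]
      congr 1
      simp only [Finset.mul_sum, Finset.sum_mul]
      rw [Finset.sum_comm]
      exact Finset.sum_congr rfl fun m _ => Finset.sum_congr rfl fun r _ => by ring
  -- each fⱼ ∘ γ is Good
  have key0 : ∀ j, Good (fun t => f j (γ t)) := by
    intro j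
    refine ⟨fun m _ => if m = j then (1 : ℝ) else 0, fun m => contDiff_const, ?_⟩
    intro t _
    simp [ite_mul, Finset.sum_ite_eq']
  -- Good functions vanish at t₀
  have key2 : ∀ h : ℝ → ℝ, Good h → h t₀ = 0 := by
    rintro h ⟨c, _, hrep⟩
    rw [hrep t₀ ht₀]
    simp [hzero]
  intro j
  have hiter : ∀ N, iteratedDeriv N (fun t => f j (γ t)) t₀ = 0 := by
    have : ∀ N, Good (iteratedDeriv N (fun t => f j (γ t))) := by
      intro N
      induction N with
      | zero => simpa [iteratedDeriv_zero] using key0 j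
      | succ N ih => rw [iteratedDeriv_succ]; exact key1 _ ih
    exact fun N => key2 _ (this N)
  have hev : (fun t => f j (γ t)) =ᶠ[nhds t₀] 0 :=
    analytic_eventually_zero ((hanal j) t₀ ht₀) hiter
  intro t ht
  exact (hanal j).eqOn_zero_of_preconnected_of_eventuallyEq_zero isPreconnected_Ioo ht₀ hev ht
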